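/- Suppose the sampling set M satisfies the network compatibility condition with constants K > 0 and L > sqrt(p), the true signal x is clustered with respect to the partition F, and observations y[i] = x[i] + ε[i] for i in M. Then any minimizer x̂ of the nLasso objective sum_{i in M} ||x̃[i] - y[i]||_1 + (1/K)||x̃||_E satisfies ||x̂ - x||_E ≤ K (1 + 4 sqrt(p)/(L - sqrt(p))) * sum_{i in M} ||ε[i]||_1. -/

import Mathlib

open Finset

noncomputable def TV {V : Type*} {p : ℕ} (W : V → V → ℝ) (S : Finset (V × V))
    (x : V → EuclideanSpace ℝ (Fin p)) : ℝ :=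
  ∑ e ∈ S, W e.1 e.2 * ‖x e.1 - x e.2‖

noncomputable def l1 {p : ℕ} (v : EuclideanSpace ℝ (Fin p)) : ℝ := ∑ k, |v k|

lemma l1_nonneg {p : ℕ} (v : EuclideanSpace ℝ (Fin p)) : 0 ≤ l1 v :=
  Finset.sum_nonneg fun _ _ => abs_nonneg _

lemma l1_neg {p : ℕ} (v : EuclideanSpace ℝ (Fin p)) : l1 (-v) = l1 v := by
  unfold l1
  refine Finset.sum_congr rfl fun k _ => ?_
  show |(-v) k| = |v k|
  simp

lemma l1_triangle {p : ℕ} (u v : EuclideanSpace ℝ (Fin p)) :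
    l1 (u + v) ≤ l1 u + l1 v := by
  unfold l1
  rw [← Finset.sum_add_distrib]
  refine Finset.sum_le_sum fun k _ => ?_
  exact abs_add_le _ _

lemma norm_le_l1 {p : ℕ} (v : EuclideanSpace ℝ (Fin p)) : ‖v‖ ≤ l1 v := by
  rw [EuclideanSpace.norm_eq]
  have h1 : ∑ k, ‖v k‖ ^ 2 ≤ (∑ k, |v k|) ^ 2 := by
    have : ∀ k : Fin p, ‖v k‖ ^ 2 ≤ |v k| * ∑ j, |v j| := by
      intro k
      have hk : |v k| ≤ ∑ j, |v j| :=
        Finset.single_le_sum (f := fun j => |v j|) (fun j _ => abs_nonneg _)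
          (Finset.mem_univ k)
      have : ‖v k‖ ^ 2 = |v k| * |v k| := by rw [Real.norm_eq_abs]; ring
      rw [this]
      exact mul_le_mul_of_nonneg_left hk (abs_nonneg _)
    calc ∑ k, ‖v k‖ ^ 2 ≤ ∑ k, |v k| * ∑ j, |v j| :=
          Finset.sum_le_sum fun k _ => this k
      _ = (∑ k, |v k|) ^ 2 := by rw [← Finset.sum_mul]; ring
  calc Real.sqrt (∑ k, ‖v k‖ ^ 2) ≤ Real.sqrt ((∑ k, |v k|) ^ 2) :=
        Real.sqrt_le_sqrt h1
    _ = ∑ k, |v k| := Real.sqrt_sq (Finset.sum_nonneg fun _ _ => abs_nonneg _)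

lemma TV_nonneg {V : Type*} {p : ℕ} (W : V → V → ℝ) (hW : ∀ i j, 0 ≤ W i j)
    (S : Finset (V × V)) (x : V → EuclideanSpace ℝ (Fin p)) : 0 ≤ TV W S x :=
  Finset.sum_nonneg fun e _ => mul_nonneg (hW _ _) (norm_nonneg _)

set_option maxHeartbeats 1000000 in
/-- nLasso recovery under the network compatibility condition. -/
theorem stmt2 {V ι : Type*} [Fintype V] [DecidableEq V] [DecidableEq ι] {p : ℕ}
    (E : Finset (V × V)) (W : V → V → ℝ) (hW : ∀ i j, 0 ≤ W i j)
    (M : Finset V) (σ : V → ι) (K L : ℝ) (hK : 0 < K) (hL : Real.sqrt p < L)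
    (hNCC : ∀ z : V → EuclideanSpace ℝ (Fin p),
      (L / Real.sqrt p) * TV W (E.filter (fun e => σ e.1 ≠ σ e.2)) z ≤
        K * ∑ i ∈ M, ‖z i‖ + TV W (E.filter (fun e => σ e.1 = σ e.2)) z)
    (a : ι → EuclideanSpace ℝ (Fin p)) (x : V → EuclideanSpace ℝ (Fin p))
    (hx : ∀ i, x i = a (σ i))
    (ε y : V → EuclideanSpace ℝ (Fin p)) (hy : ∀ i ∈ M, y i = x i + ε i)
    (xhat : V → EuclideanSpace ℝ (Fin p))
    (hmin : ∀ u : V → EuclideanSpace ℝ (Fin p),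
      ∑ i ∈ M, l1 (xhat i - y i) + (1 / K) * TV W E xhat ≤
        ∑ i ∈ M, l1 (u i - y i) + (1 / K) * TV W E u) :
    TV W E (xhat - x) ≤
      K * (1 + 4 * Real.sqrt p / (L - Real.sqrt p)) * ∑ i ∈ M, l1 (ε i) := by
  rcases Nat.eq_zero_or_pos p with hp | hp
  · -- degenerate case p = 0 : everything is zero
    subst hp
    have hz : ∀ v : EuclideanSpace ℝ (Fin 0), ‖v‖ = 0 := by
      intro v
      rw [EuclideanSpace.norm_eq]
      simp
    have hTV : TV W E (xhat - x) = 0 := by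
      unfold TV
      refine Finset.sum_eq_zero fun e _ => ?_
      rw [hz]; ring
    have hl1 : ∀ i, l1 (ε i) = (0 : ℝ) := by
      intro i; unfold l1; simp
    rw [hTV]
    have : ∑ i ∈ M, l1 (ε i) = 0 := Finset.sum_eq_zero fun i _ => hl1 i
    rw [this]; ring_nf; exact le_refl 0
  -- main case p ≥ 1
  have hsplitgen : ∀ u : V → EuclideanSpace ℝ (Fin p),
      TV W E u = TV W (E.filter (fun e => σ e.1 = σ e.2)) u +
        TV W (E.filter (fun e => σ e.1 ≠ σ e.2)) u := by
    intro u
    unfold TV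
    simp only [ne_eq]
    exact (Finset.sum_filter_add_sum_filter_not E (fun e => σ e.1 = σ e.2)
      (fun e => W e.1 e.2 * ‖u e.1 - u e.2‖)).symm
  set s := Real.sqrt p with hs_def
  have hs : 0 < s := Real.sqrt_pos.mpr (by exact_mod_cast hp)
  set z := xhat - x with hz_def
  set SB := E.filter (fun e => σ e.1 ≠ σ e.2) with hSB
  set SI := E.filter (fun e => σ e.1 = σ e.2) with hSI
  set Bt := TV W SB z with hBt_def
  set It := TV W SI z with hIt_def
  set Eps := ∑ i ∈ M, l1 (ε i) with hEps_def
  set D := ∑ i ∈ M, l1 (xhat i - y i) with hD_def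
  set N := ∑ i ∈ M, ‖z i‖ with hN_def
  -- x is constant on interior edges
  have hxint : ∀ e ∈ SI, x e.1 = x e.2 := by
    intro e he
    rw [hSI, Finset.mem_filter] at he
    rw [hx e.1, hx e.2, he.2]
  -- interior TV of xhat equals interior TV of z
  have hIhat : TV W SI xhat = It := by
    rw [hIt_def]
    unfold TV
    refine Finset.sum_congr rfl fun e he => ?_
    have hxe := hxint e he
    have : z e.1 - z e.2 = xhat e.1 - xhat e.2 := by
      show (xhat e.1 - x e.1) - (xhat e.2 - x e.2) = xhat e.1 - xhat e.2
      rw [hxe]; abel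
    rw [this]
  -- interior TV of x is zero
  have hIx : TV W SI x = 0 := by
    unfold TV
    refine Finset.sum_eq_zero fun e he => ?_
    rw [hxint e he, sub_self, norm_zero, mul_zero]
  -- boundary TV triangle : TV_∂ x ≤ TV_∂ xhat + Bt
  have hBtri : TV W SB x ≤ TV W SB xhat + Bt := by
    rw [hBt_def]
    unfold TV
    rw [← Finset.sum_add_distrib]
    refine Finset.sum_le_sum fun e _ => ?_
    rw [← mul_add]
    refine mul_le_mul_of_nonneg_left ?_ (hW _ _)
    have : x e.1 - x e.2 = (xhat e.1 - xhat e.2) - (z e.1 - z e.2) := by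
      show x e.1 - x e.2 = (xhat e.1 - xhat e.2) -
        ((xhat e.1 - x e.1) - (xhat e.2 - x e.2))
      abel
    rw [this]
    exact norm_sub_le _ _
  -- ∑ l1 (x i - y i) = Eps
  have hxy : ∑ i ∈ M, l1 (x i - y i) = Eps := by
    rw [hEps_def]
    refine Finset.sum_congr rfl fun i hi => ?_
    have : x i - y i = -(ε i) := by rw [hy i hi]; abel
    rw [this, l1_neg]
  -- key optimality inequality
  have hopt := hmin x
  rw [hxy, hsplitgen xhat, hsplitgen x, hIhat, hIx] at hopt
  -- hopt : D + (1/K) * (It + TV W SB xhat) ≤ Eps + (1/K) * (0 + TV W SB x)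
  have hKne : K ≠ 0 := ne_of_gt hK
  have h1 : K * D + It ≤ K * Eps + Bt := by
    have h := mul_le_mul_of_nonneg_left hopt hK.le
    have e1 : K * (D + 1 / K * (It + TV W SB xhat)) = K * D + (It + TV W SB xhat) := by
      field_simp
    have e2 : K * (Eps + 1 / K * (0 + TV W SB x)) = K * Eps + (0 + TV W SB x) := by
      field_simp
    rw [e1, e2] at h
    linarith [hBtri]
  -- N ≤ D + Eps
  have h2 : N ≤ D + Eps := by
    rw [hN_def, hD_def, hEps_def, ← Finset.sum_add_distrib]
    refine Finset.sum_le_sum fun i hi => ?_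
    have hzi : z i = (xhat i - y i) + ε i := by
      show xhat i - x i = (xhat i - y i) + ε i
      rw [hy i hi]; abel
    calc ‖z i‖ ≤ l1 (z i) := norm_le_l1 _
      _ = l1 ((xhat i - y i) + ε i) := by rw [hzi]
      _ ≤ l1 (xhat i - y i) + l1 (ε i) := l1_triangle _ _
  -- NCC for z
  have h3 : (L / s) * Bt ≤ K * N + It := hNCC z
  have hD0 : 0 ≤ D := Finset.sum_nonneg fun i _ => l1_nonneg _
  have hEps0 : 0 ≤ Eps := Finset.sum_nonneg fun i _ => l1_nonneg _
  have hBt0 : 0 ≤ Bt := TV_nonneg W hW SB z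
  have hIt0 : 0 ≤ It := TV_nonneg W hW SI z
  have hLs : 0 < L - s := by linarith
  -- bound on Bt
  have hA : (L / s) * Bt ≤ 2 * K * Eps + Bt := by
    have hKN : K * N ≤ K * (D + Eps) := mul_le_mul_of_nonneg_left h2 hK.le
    nlinarith [hKN]
  have hLdiv : L / s * Bt = L * Bt / s := by ring
  have hB1 : L * Bt ≤ (2 * K * Eps + Bt) * s := by
    rw [hLdiv, div_le_iff₀ hs] at hA
    linarith
  have hBbound : Bt ≤ 2 * K * Eps * s / (L - s) := by
    rw [le_div_iff₀ hLs]
    nlinarith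
  -- conclude
  rw [hsplitgen z]
  have hIbound : It ≤ K * Eps + Bt := by
    linarith [mul_nonneg hK.le hD0]
  have hfinal : It + Bt ≤ K * Eps + 2 * (2 * K * Eps * s / (L - s)) := by
    linarith
  calc TV W SI z + TV W SB z = It + Bt := by rw [hIt_def, hBt_def]
    _ ≤ K * Eps + 2 * (2 * K * Eps * s / (L - s)) := hfinal
    _ = K * (1 + 4 * s / (L - s)) * Eps := by
        field_simp
        ring
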